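/- Let γ : ℝ → ℝ be a mountain chain and f analytic on the strip |Im z| < ε for some ε > 0. Then for every p > 1, ∫_ℝ |f(t)|^p γ(t) dt ≤ C · sup_{|y|<ε} ∫_ℝ |f(t+iy)|^p dt, where C depends only on γ, p, ε. -/

import Mathlib

/-- A mountain chain: a piecewise continuous function consisting of Poisson-shaped
mountains `η/((x-ξ)²+η²)` (with `η ≤ 1`) over disjoint ordered bases `[a i, b i)` of
length comparable to 1, whose summits are horizontally bounded away from the base
endpoints, and plateaux of constant level 1 elsewhere. -/
structure MountainChain where
  toFun : ℝ → ℝ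
  S : Set ℤ
  a : ℤ → ℝ
  b : ℤ → ℝ
  ξ : ℤ → ℝ
  η : ℤ → ℝ
  c1 : ℝ
  c2 : ℝ
  d : ℝ
  hc1 : 0 < c1
  hd : 0 < d
  hbase : ∀ i ∈ S, c1 ≤ b i - a i ∧ b i - a i ≤ c2
  hsummit : ∀ i ∈ S, d ≤ ξ i - a i ∧ d ≤ b i - ξ i
  hη : ∀ i ∈ S, 0 < η i ∧ η i ≤ 1
  hord : ∀ i ∈ S, ∀ j ∈ S, i < j → b i ≤ a j
  hmount : ∀ i ∈ S, ∀ x ∈ Set.Ico (a i) (b i),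
    toFun x = η i / ((x - ξ i) ^ 2 + (η i) ^ 2)
  hplateau : ∀ x : ℝ, x ∉ (⋃ i ∈ S, Set.Ico (a i) (b i)) → toFun x = 1

open MeasureTheory Set
open scoped Real ENNReal Topology

lemma isOpen_strip (ε : ℝ) : IsOpen {z : ℂ | |z.im| < ε} :=
  isOpen_lt (Complex.continuous_im.abs) continuous_const

lemma measurable_indicator_of_continuousOn {X : Type*} [TopologicalSpace X] [MeasurableSpace X]
    [OpensMeasurableSpace X] {g : X → ℝ≥0∞} {U : Set X} (hU : IsOpen U)
    (hg : ContinuousOn g U) : Measurable (U.indicator g) := by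
  have h1 : Measurable (fun x : U => g x) := (ContinuousOn.restrict hg).measurable
  have h2 : MeasurableEmbedding (Subtype.val : U → X) :=
    MeasurableEmbedding.subtype_coe hU.measurableSet
  have h3 : U.indicator g = Function.extend Subtype.val (fun x : U => g x) (fun _ => 0) := by
    funext x
    by_cases hx : x ∈ U
    · rw [Set.indicator_of_mem hx, Subtype.val_injective.extend_apply _ _ ⟨x, hx⟩]
    · rw [Set.indicator_of_notMem hx, Function.extend_apply']
      rintro ⟨a, rfl⟩
      exact hx a.2
  rw [h3]
  exact h2.measurable_extend h1 measurable_const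

lemma circle_bound {ε : ℝ} (f : ℂ → ℂ) (hf : DifferentiableOn ℂ f {z : ℂ | |z.im| < ε})
    (t ρ : ℝ) (hρ : 0 < ρ) (hρε : ρ < ε) :
    ‖f t‖ * (2 * π) ≤ ∫ θ in (-π)..π, ‖f (circleMap t ρ θ)‖ := by
  have hsub : Metric.closedBall (t : ℂ) ρ ⊆ {z : ℂ | |z.im| < ε} := by
    intro z hz
    simp only [Metric.mem_closedBall, Complex.dist_eq] at hz
    have h1 : |(z - (t : ℂ)).im| ≤ ‖z - t‖ := Complex.abs_im_le_norm _
    simp only [Complex.sub_im, Complex.ofReal_im, sub_zero] at h1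
    exact Set.mem_setOf_eq ▸ lt_of_le_of_lt (h1.trans hz) hρε
  have hc : ContinuousOn f (Metric.closedBall (t : ℂ) ρ) := hf.continuousOn.mono hsub
  have hd : ∀ x ∈ Metric.ball (t : ℂ) ρ \ (∅ : Set ℂ), DifferentiableAt ℂ f x := by
    intro x hx
    exact hf.differentiableAt ((isOpen_strip ε).mem_nhds (hsub (Metric.ball_subset_closedBall hx.1)))
  have key := Complex.two_pi_I_inv_smul_circleIntegral_sub_inv_smul_of_differentiable_on_off_countable
      Set.countable_empty (Metric.mem_ball_self hρ) hc hd
  -- step 1 : norm bound over 0..2π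
  have h2 : ‖f t‖ ≤ (2 * π)⁻¹ * ∫ θ in (0:ℝ)..2*π, ‖f (circleMap t ρ θ)‖ := by
    have e1 : ‖f t‖ =
        (2 * π)⁻¹ * ‖∮ z in C((t:ℂ), ρ), (z - (t:ℂ))⁻¹ • f z‖ := by
      rw [← key]
      rw [show ((2 * ↑π * Complex.I)⁻¹ • ∮ (z : ℂ) in C((t:ℂ), ρ), (z - (t:ℂ))⁻¹ • f z)
        = ((2 * ↑π * Complex.I)⁻¹ : ℂ) • ∮ (z : ℂ) in C((t:ℂ), ρ), (z - (t:ℂ))⁻¹ • f z from rfl,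
        show ‖(((2 * ↑π * Complex.I)⁻¹ : ℂ)) • ∮ (z : ℂ) in C((t:ℂ), ρ), (z - (t:ℂ))⁻¹ • f z‖
          = ‖(((2 * ↑π * Complex.I)⁻¹ : ℂ)) • ∮ (z : ℂ) in C((t:ℂ), ρ), (z - (t:ℂ))⁻¹ • f z‖ from rfl,
        norm_smul]
      congr 1
      simp only [norm_inv, norm_mul, Complex.norm_I, Complex.norm_real, Real.norm_eq_abs,
        Complex.norm_two, mul_one, abs_of_pos Real.pi_pos]
    rw [e1]
    have h3 : ‖∮ z in C((t:ℂ), ρ), (z - (t:ℂ))⁻¹ • f z‖ ≤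
        ∫ θ in (0:ℝ)..2*π, ‖f (circleMap t ρ θ)‖ := by
      rw [circleIntegral]
      refine (intervalIntegral.norm_integral_le_integral_norm (by positivity)).trans_eq ?_
      refine intervalIntegral.integral_congr fun θ _ => ?_
      rw [norm_smul, norm_smul, deriv_circleMap, circleMap_sub_center]
      simp only [norm_mul, norm_circleMap_zero, Complex.norm_I, mul_one,
        norm_inv, abs_of_pos hρ]
      rw [← mul_assoc, mul_inv_cancel₀ hρ.ne', one_mul]
    have hpos : (0:ℝ) ≤ (2 * π)⁻¹ := by positivity
    exact mul_le_mul_of_nonneg_left h3 hpos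
  -- step 2 : periodicity
  have hper : (∫ θ in (0:ℝ)..2*π, ‖f (circleMap t ρ θ)‖)
      = ∫ θ in (-π)..π, ‖f (circleMap t ρ θ)‖ := by
    have P : Function.Periodic (fun θ => ‖f (circleMap t ρ θ)‖) (2*π) :=
      fun θ => by simp only [Function.comp]; rw [periodic_circleMap (t:ℂ) ρ θ]
    have h4 := P.intervalIntegral_add_eq (-π) 0
    rw [zero_add, show -π + 2*π = π by ring] at h4
    exact h4.symm
  rw [hper] at h2
  rw [mul_comm]
  calc (2*π) * ‖f t‖ ≤ (2*π) * ((2 * π)⁻¹ * ∫ θ in (-π)..π, ‖f (circleMap t ρ θ)‖) :=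
        mul_le_mul_of_nonneg_left h2 (by positivity)
    _ = _ := by
        rw [← mul_assoc, mul_inv_cancel₀ (by positivity), one_mul]

lemma circle_bound_pow {ε p : ℝ} (hp : 1 < p) (f : ℂ → ℂ)
    (hf : DifferentiableOn ℂ f {z : ℂ | |z.im| < ε})
    (t ρ : ℝ) (hρ : 0 < ρ) (hρε : ρ < ε) :
    ENNReal.ofReal (‖f t‖ ^ p) * ENNReal.ofReal (2 * π) ≤
      ∫⁻ θ in Ioo (-π) π, ENNReal.ofReal (‖f (circleMap t ρ θ)‖ ^ p) := by
  have hp0 : (0:ℝ) < p := lt_trans one_pos hp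
  have hcm : Continuous fun θ : ℝ => ‖f (circleMap t ρ θ)‖ := by
    have hmem : ∀ θ : ℝ, circleMap t ρ θ ∈ {z : ℂ | |z.im| < ε} := by
      intro θ
      have : ‖circleMap t ρ θ - t‖ ≤ ρ := by
        rw [circleMap_sub_center, norm_circleMap_zero, abs_of_pos hρ]
      have h1 : |(circleMap t ρ θ - (t : ℂ)).im| ≤ ‖circleMap t ρ θ - t‖ :=
        Complex.abs_im_le_norm _
      simp only [Complex.sub_im, Complex.ofReal_im, sub_zero] at h1
      exact Set.mem_setOf_eq ▸ lt_of_le_of_lt (h1.trans this) hρε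
    exact continuous_norm.comp
      ((hf.continuousOn.comp_continuous (continuous_circleMap _ _) hmem))
  set ν : Measure ℝ := volume.restrict (Ioo (-π) π) with hν
  set g : ℝ → ℝ≥0∞ := fun θ => ENNReal.ofReal (‖f (circleMap t ρ θ)‖) with hg
  have hgm : Measurable g := hcm.measurable.ennreal_ofReal
  set τ : ℝ≥0∞ := ENNReal.ofReal (2 * π) with hτ
  have hτ0 : τ ≠ 0 := by
    simp [hτ, ENNReal.ofReal_eq_zero, not_le]
    positivity
  have hτt : τ ≠ ⊤ := ENNReal.ofReal_ne_top
  have hν2π : ν univ = τ := by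
    rw [hν, Measure.restrict_apply_univ, Real.volume_Ioo, hτ]
    congr 1; ring
  -- step 1
  have h1 : ENNReal.ofReal (‖f t‖) * τ ≤ ∫⁻ θ, g θ ∂ν := by
    have hcb := circle_bound f hf t ρ hρ hρε
    have hint : ∫ θ in (-π)..π, ‖f (circleMap t ρ θ)‖
        = ∫ θ in Ioc (-π) π, ‖f (circleMap t ρ θ)‖ :=
      intervalIntegral.integral_of_le (by linarith [Real.pi_pos])
    have hIoo : (∫⁻ θ, g θ ∂ν) = ∫⁻ θ in Ioc (-π) π, g θ := by
      rw [hν, Measure.restrict_congr_set Ioo_ae_eq_Ioc]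
    rw [hIoo, ← ofReal_integral_eq_lintegral_ofReal
      ((hcm.integrableOn_Icc (a := -π) (b := π)).mono_set Ioc_subset_Icc_self)
      (Filter.Eventually.of_forall fun θ => norm_nonneg _)]
    rw [← ENNReal.ofReal_mul (norm_nonneg _)]
    exact ENNReal.ofReal_le_ofReal (hint ▸ hcb)
  -- step 2 : Hölder
  have hpq : Real.HolderConjugate p (Real.conjExponent p) := Real.HolderConjugate.conjExponent hp
  set q : ℝ := Real.conjExponent p with hq
  have h2 : (∫⁻ θ, g θ ∂ν) ≤ (∫⁻ θ, (g θ) ^ p ∂ν) ^ (1/p) * τ ^ (1/q) := by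
    have := ENNReal.lintegral_mul_le_Lp_mul_Lq ν hpq hgm.aemeasurable
      (aemeasurable_const (b := (1:ℝ≥0∞)))
    simpa [lintegral_const, hν2π, ENNReal.one_rpow] using this
  -- combine
  set A : ℝ≥0∞ := ENNReal.ofReal (‖f t‖) with hA
  set Jp : ℝ≥0∞ := ∫⁻ θ, (g θ) ^ p ∂ν with hJp
  have h3 : A ≤ Jp ^ (1/p) * τ ^ (1/q) * τ⁻¹ := by
    have h := h1.trans h2
    rwa [← ENNReal.le_div_iff_mul_le (Or.inl hτ0) (Or.inl hτt), div_eq_mul_inv] at h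
  have h4 : A ^ p ≤ Jp * τ⁻¹ := by
    have hr := ENNReal.rpow_le_rpow h3 hp0.le
    have e1 : (Jp ^ (1/p) * τ ^ (1/q) * τ⁻¹) ^ p = Jp * τ⁻¹ := by
      rw [← ENNReal.rpow_neg_one τ, mul_assoc, ← ENNReal.rpow_add _ _ hτ0 hτt,
        ENNReal.mul_rpow_of_nonneg _ _ hp0.le, ← ENNReal.rpow_mul, ← ENNReal.rpow_mul,
        one_div_mul_cancel hp0.ne', ENNReal.rpow_one]
      congr 1
      have h5 : 1/q + -1 = -(1/p) := by
        have h6 := hpq.inv_add_inv_eq_one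
        rw [one_div, one_div]
        linarith
      rw [h5, show -(1/p) * p = -1 by field_simp]
    rwa [e1] at hr
  have h6 : A ^ p * τ ≤ Jp := by
    calc A ^ p * τ ≤ Jp * τ⁻¹ * τ := mul_le_mul_left h4 τ
      _ = Jp := by rw [mul_assoc, ENNReal.inv_mul_cancel hτ0 hτt, mul_one]
  have e2 : ENNReal.ofReal (‖f t‖ ^ p) = A ^ p :=
    (ENNReal.ofReal_rpow_of_nonneg (norm_nonneg _) hp0.le).symm
  rw [e2]
  refine h6.trans (le_of_eq (lintegral_congr fun θ => ?_))
  exact ENNReal.ofReal_rpow_of_nonneg (norm_nonneg _) hp0.le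

lemma area_bound {ε p : ℝ} (hp : 1 < p) {r : ℝ} (hr : 0 < r) (hrε : r < ε) (f : ℂ → ℂ)
    (hf : DifferentiableOn ℂ f {z : ℂ | |z.im| < ε}) (t : ℝ) :
    ENNReal.ofReal (‖f t‖ ^ p) * (ENNReal.ofReal (2 * π) * ENNReal.ofReal (r^2/2)) ≤
      ∫⁻ q in Ioo (t - r) (t + r) ×ˢ Ioo (-r) r,
        ({z : ℂ | |z.im| < ε}.indicator (fun z => ENNReal.ofReal (‖f z‖ ^ p))
          ((q.1 : ℂ) + (q.2 : ℂ) * Complex.I)) := by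
  have hp0 : (0:ℝ) < p := lt_trans one_pos hp
  set U : Set ℂ := {z : ℂ | |z.im| < ε} with hU
  have hUo : IsOpen U := isOpen_strip ε
  set g : ℂ → ℝ≥0∞ := fun z => ENNReal.ofReal (‖f z‖ ^ p) with hg
  have hgc : ContinuousOn g U := by
    apply ENNReal.continuous_ofReal.comp_continuousOn
    exact (continuous_norm.comp_continuousOn hf.continuousOn).rpow_const
      (fun x _ => Or.inr hp0.le)
  have hWm : Measurable (U.indicator g) := measurable_indicator_of_continuousOn hUo hgc
  set Φ : ℝ × ℝ → ℝ≥0∞ := fun q => U.indicator g ((q.1 : ℂ) + (q.2 : ℂ) * Complex.I) with hΦ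
  have hem : Measurable (fun q : ℝ × ℝ => ((q.1 : ℂ) + (q.2 : ℂ) * Complex.I)) := by
    apply Measurable.add
    · exact Complex.measurable_ofReal.comp measurable_fst
    · exact (Complex.measurable_ofReal.comp measurable_snd).mul_const _
  have hΦm : Measurable Φ := hWm.comp hem
  set F : ℝ × ℝ → ℝ × ℝ := fun q => (((t:ℝ), (0:ℝ)) : ℝ × ℝ) + polarCoord.symm q with hF
  have hFap : ∀ q : ℝ × ℝ, F q = (t + q.1 * Real.cos q.2, q.1 * Real.sin q.2) := by
    intro q
    show (((t:ℝ), (0:ℝ)) : ℝ × ℝ) + (q.1 * Real.cos q.2, q.1 * Real.sin q.2) = _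
    rw [Prod.mk_add_mk, zero_add]
  have hFm : Measurable F := by
    have : Continuous F := by
      have h1 : Continuous fun q : ℝ × ℝ => (t + q.1 * Real.cos q.2, q.1 * Real.sin q.2) := by
        refine Continuous.prodMk ?_ ?_
        · exact continuous_const.add (continuous_fst.mul (Real.continuous_cos.comp continuous_snd))
        · exact continuous_fst.mul (Real.continuous_sin.comp continuous_snd)
      have : F = fun q : ℝ × ℝ => (t + q.1 * Real.cos q.2, q.1 * Real.sin q.2) := funext hFap
      rw [this]; exact h1
    exact this.measurable
  set s₀ : Set (ℝ × ℝ) := Ioo (0:ℝ) r ×ˢ Ioo (-π) π with hs₀def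
  have hs₀ : MeasurableSet s₀ := measurableSet_Ioo.prod measurableSet_Ioo
  -- key : circle bound composed with F
  have hkey : ∀ ρ ∈ Ioo (0:ℝ) r,
      ENNReal.ofReal (‖f t‖ ^ p) * ENNReal.ofReal (2 * π) ≤
      ∫⁻ θ in Ioo (-π) π, Φ (F (ρ, θ)) := by
    intro ρ hρ
    refine (circle_bound_pow hp f hf t ρ hρ.1 (hρ.2.trans hrε)).trans (le_of_eq ?_)
    refine setLIntegral_congr_fun measurableSet_Ioo (fun θ _ => ?_)
    have hsin : |ρ * Real.sin θ| < ε := by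
      have h1 : |ρ * Real.sin θ| ≤ |ρ| * 1 := by
        rw [abs_mul]
        exact mul_le_mul_of_nonneg_left (Real.abs_sin_le_one θ) (abs_nonneg ρ)
      rw [mul_one, abs_of_pos hρ.1] at h1
      linarith [hρ.2]
    have hcm : circleMap t ρ θ = ((t + ρ * Real.cos θ : ℝ) : ℂ)
        + ((ρ * Real.sin θ : ℝ) : ℂ) * Complex.I := by
      show (t : ℂ) + ρ * Complex.exp (θ * Complex.I) = _
      rw [Complex.exp_mul_I, ← Complex.ofReal_cos, ← Complex.ofReal_sin]
      push_cast
      ring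
    have hmemU : ((t + ρ * Real.cos θ : ℝ) : ℂ) + ((ρ * Real.sin θ : ℝ) : ℂ) * Complex.I ∈ U := by
      simp only [hU, mem_setOf_eq, Complex.add_im, Complex.ofReal_im, Complex.mul_im,
        Complex.I_im, Complex.I_re, Complex.ofReal_re, mul_one, mul_zero, zero_add, add_zero]
      exact hsin
    have : Φ (F (ρ, θ)) = ENNReal.ofReal (‖f (circleMap t ρ θ)‖ ^ p) := by
      simp only [hΦ, hFap]
      rw [Set.indicator_of_mem hmemU, ← hcm]
    rw [this]
  -- ∫ ρ dρ = r²/2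
  have hint : (∫⁻ ρ in Ioo (0:ℝ) r, ENNReal.ofReal ρ) = ENNReal.ofReal (r^2/2) := by
    rw [← ofReal_integral_eq_lintegral_ofReal]
    · congr 1
      rw [show (volume.restrict (Ioo (0:ℝ) r)) = volume.restrict (Ioc (0:ℝ) r) from
          Measure.restrict_congr_set Ioo_ae_eq_Ioc]
      rw [← intervalIntegral.integral_of_le hr.le, integral_id]
      norm_num
    · exact (continuous_id.integrableOn_Icc).mono_set Ioo_subset_Icc_self
    · exact (ae_restrict_mem measurableSet_Ioo).mono fun x hx => hx.1.le
  set X : ℝ≥0∞ := ENNReal.ofReal (‖f t‖ ^ p) * ENNReal.ofReal (2 * π) with hX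
  have hXt : X ≠ ⊤ := ENNReal.mul_ne_top ENNReal.ofReal_ne_top ENNReal.ofReal_ne_top
  have step1 : ENNReal.ofReal (‖f t‖ ^ p) *
      (ENNReal.ofReal (2 * π) * ENNReal.ofReal (r^2/2)) ≤
      ∫⁻ ρ in Ioo (0:ℝ) r, ENNReal.ofReal ρ * (∫⁻ θ in Ioo (-π) π, Φ (F (ρ, θ))) := by
    have e1 : (∫⁻ ρ in Ioo (0:ℝ) r, ENNReal.ofReal ρ * X) = ENNReal.ofReal (r^2/2) * X := by
      rw [lintegral_mul_const' X _ hXt, hint]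
    calc ENNReal.ofReal (‖f t‖ ^ p) *
        (ENNReal.ofReal (2 * π) * ENNReal.ofReal (r^2/2))
        = ENNReal.ofReal (r^2/2) * X := by rw [hX]; ring
      _ = ∫⁻ ρ in Ioo (0:ℝ) r, ENNReal.ofReal ρ * X := e1.symm
      _ ≤ _ := by
          refine lintegral_mono_ae ?_
          filter_upwards [ae_restrict_mem measurableSet_Ioo] with ρ hρm
          exact mul_le_mul_right (hkey ρ hρm) _
  -- Tonelli
  have hkm : Measurable fun q : ℝ × ℝ => ENNReal.ofReal q.1 * Φ (F q) :=
    (measurable_fst.ennreal_ofReal).mul (hΦm.comp hFm)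
  have step2 : (∫⁻ ρ in Ioo (0:ℝ) r, ENNReal.ofReal ρ * (∫⁻ θ in Ioo (-π) π, Φ (F (ρ, θ))))
      = ∫⁻ q in s₀, ENNReal.ofReal q.1 * Φ (F q) := by
    have e2 : ∀ ρ : ℝ, ENNReal.ofReal ρ * (∫⁻ θ in Ioo (-π) π, Φ (F (ρ, θ)))
        = ∫⁻ θ in Ioo (-π) π, ENNReal.ofReal ρ * Φ (F (ρ, θ)) := fun ρ =>
      (lintegral_const_mul' _ _ ENNReal.ofReal_ne_top).symm
    simp_rw [e2]
    rw [show (volume : Measure (ℝ × ℝ)) = (volume : Measure ℝ).prod volume from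
        Measure.volume_eq_prod ℝ ℝ, hs₀def, ← Measure.prod_restrict,
      MeasureTheory.lintegral_prod _ hkm.aemeasurable]
  -- Jacobian change of variables
  set B : ℝ × ℝ → (ℝ × ℝ) →L[ℝ] (ℝ × ℝ) := fun q =>
    LinearMap.toContinuousLinearMap (Matrix.toLin (Module.Basis.finTwoProd ℝ) (Module.Basis.finTwoProd ℝ)
      !![Real.cos q.2, -q.1 * Real.sin q.2; Real.sin q.2, q.1 * Real.cos q.2]) with hB
  have hF' : ∀ q ∈ s₀, HasFDerivWithinAt F (B q) s₀ q := fun q _ =>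
    ((hasFDerivAt_polarCoord_symm q).const_add (((t:ℝ), (0:ℝ)) : ℝ × ℝ)).hasFDerivWithinAt
  have hBdet : ∀ q : ℝ × ℝ, (B q).det = q.1 := by
    intro q
    conv_rhs => rw [← one_mul q.1, ← Real.cos_sq_add_sin_sq q.2]
    simp only [hB, neg_mul, LinearMap.det_toContinuousLinearMap, LinearMap.det_toLin,
      Matrix.det_fin_two_of, sub_neg_eq_add]
    ring
  have hinj : InjOn F s₀ := by
    intro a ha b hb hab
    have hsub : s₀ ⊆ polarCoord.symm.source := by
      rw [OpenPartialHomeomorph.symm_source]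
      rintro ⟨x1, x2⟩ ⟨h1, h2⟩
      exact ⟨h1.1, h2⟩
    have := polarCoord.symm.injOn (hsub ha) (hsub hb) (add_left_cancel hab)
    exact this
  have jac := lintegral_image_eq_lintegral_abs_det_fderiv_mul volume hs₀ hF' hinj Φ
  have step3 : (∫⁻ q in s₀, ENNReal.ofReal q.1 * Φ (F q)) = ∫⁻ x in F '' s₀, Φ x := by
    rw [jac]
    refine setLIntegral_congr_fun hs₀ (fun q hq => ?_)
    rw [hBdet, abs_of_pos hq.1.1]
  -- image inside rectangle
  have himg : F '' s₀ ⊆ Ioo (t - r) (t + r) ×ˢ Ioo (-r) r := by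
    rintro _ ⟨q, hq, rfl⟩
    rw [hFap]
    have hq1 : 0 < q.1 := hq.1.1
    have hq1r : q.1 < r := hq.1.2
    have hcos : |q.1 * Real.cos q.2| < r := by
      have h1 : |q.1 * Real.cos q.2| ≤ |q.1| * 1 := by
        rw [abs_mul]
        exact mul_le_mul_of_nonneg_left (Real.abs_cos_le_one q.2) (abs_nonneg q.1)
      rw [mul_one, abs_of_pos hq1] at h1
      linarith
    have hsin : |q.1 * Real.sin q.2| < r := by
      have h1 : |q.1 * Real.sin q.2| ≤ |q.1| * 1 := by
        rw [abs_mul]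
        exact mul_le_mul_of_nonneg_left (Real.abs_sin_le_one q.2) (abs_nonneg q.1)
      rw [mul_one, abs_of_pos hq1] at h1
      linarith
    obtain ⟨hc1, hc2⟩ := abs_lt.mp hcos
    obtain ⟨hs1, hs2⟩ := abs_lt.mp hsin
    simp only [mem_prod, mem_Ioo]
    exact ⟨⟨by linarith, by linarith⟩, hs1, hs2⟩
  calc ENNReal.ofReal (‖f t‖ ^ p) *
      (ENNReal.ofReal (2 * π) * ENNReal.ofReal (r^2/2))
      ≤ ∫⁻ ρ in Ioo (0:ℝ) r, ENNReal.ofReal ρ * (∫⁻ θ in Ioo (-π) π, Φ (F (ρ, θ))) := step1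
    _ = ∫⁻ q in s₀, ENNReal.ofReal q.1 * Φ (F q) := step2
    _ = ∫⁻ x in F '' s₀, Φ x := step3
    _ ≤ ∫⁻ x in Ioo (t - r) (t + r) ×ˢ Ioo (-r) r, Φ x := lintegral_mono_set himg

lemma poisson_lintegral {ξ η : ℝ} (hη : 0 < η) :
    (∫⁻ t : ℝ, ENNReal.ofReal (η / ((t - ξ)^2 + η^2))) ≤ ENNReal.ofReal π := by
  have hfun : ∀ t : ℝ, η / ((t - ξ)^2 + η^2) = η⁻¹ * (1 + ((t - ξ)/η)^2)⁻¹ := by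
    intro t
    rw [eq_comm]
    field_simp
    ring
  have hig0 : Integrable (fun x : ℝ => (1 + x^2)⁻¹) := integrable_inv_one_add_sq
  have hig1 : Integrable (fun x : ℝ => (1 + (x/η)^2)⁻¹) := by
    have := hig0.comp_div (R := η) hη.ne'
    simpa using this
  have hig : Integrable (fun t : ℝ => η⁻¹ * (1 + ((t - ξ)/η)^2)⁻¹) := by
    have h2 : Integrable (fun t : ℝ => (1 + ((t - ξ)/η)^2)⁻¹) := by
      have := hig1.comp_sub_right (g := ξ)
      simpa using this
    exact h2.const_mul _
  have hval : (∫ t : ℝ, η⁻¹ * (1 + ((t - ξ)/η)^2)⁻¹) = π := by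
    rw [MeasureTheory.integral_const_mul]
    have h3 : (∫ t : ℝ, (1 + ((t - ξ)/η)^2)⁻¹) = ∫ x : ℝ, (1 + (x/η)^2)⁻¹ := by
      exact integral_sub_right_eq_self (fun x : ℝ => (1 + (x/η)^2)⁻¹) ξ
    have h4 : (∫ x : ℝ, (1 + (x/η)^2)⁻¹) = |η| • ∫ x : ℝ, (1 + x^2)⁻¹ :=
      Measure.integral_comp_div (fun x : ℝ => (1 + x^2)⁻¹) η
    rw [h3, h4, integral_univ_inv_one_add_sq, abs_of_pos hη, smul_eq_mul, ← mul_assoc,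
      inv_mul_cancel₀ hη.ne', one_mul]
  refine le_of_eq ?_
  calc (∫⁻ t : ℝ, ENNReal.ofReal (η / ((t - ξ)^2 + η^2)))
      = ∫⁻ t : ℝ, ENNReal.ofReal (η⁻¹ * (1 + ((t - ξ)/η)^2)⁻¹) := by
        exact lintegral_congr fun t => by rw [hfun t]
    _ = ENNReal.ofReal (∫ t : ℝ, η⁻¹ * (1 + ((t - ξ)/η)^2)⁻¹) := by
        rw [← ofReal_integral_eq_lintegral_ofReal hig]
        exact Filter.Eventually.of_forall fun t => by positivity
    _ = ENNReal.ofReal π := by rw [hval]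

lemma chain_bound (Γ : MountainChain) {r : ℝ} (hr : 0 < r) (h2r : 2 * r ≤ Γ.c1) :
    ∃ GM : ℝ → ℝ≥0∞, Measurable GM ∧ (∀ t, ENNReal.ofReal (Γ.toFun t) ≤ GM t) ∧
      ∀ s : ℝ, (∫⁻ t in Ioo (s - r) (s + r), GM t) ≤
        ENNReal.ofReal (2 * r) + 2 * ENNReal.ofReal π := by
  classical
  set mi : ℤ → ℝ → ℝ≥0∞ := fun i =>
    if i ∈ Γ.S then (Ico (Γ.a i) (Γ.b i)).indicator
      (fun x => ENNReal.ofReal (Γ.η i / ((x - Γ.ξ i)^2 + (Γ.η i)^2))) else 0 with hmi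
  have hmim : ∀ i, Measurable (mi i) := by
    intro i
    simp only [hmi]
    split_ifs
    · exact Measurable.indicator
        ((measurable_const.div (((measurable_id.sub_const (Γ.ξ i)).pow_const 2).add_const
          ((Γ.η i)^2))).ennreal_ofReal) measurableSet_Ico
    · exact measurable_const
  refine ⟨fun t => 1 + ∑' i, mi i t, measurable_const.add (Measurable.ennreal_tsum hmim), ?_, ?_⟩
  · -- pointwise bound
    intro t
    by_cases ht : t ∈ ⋃ i ∈ Γ.S, Ico (Γ.a i) (Γ.b i)
    · simp only [mem_iUnion, exists_prop] at ht
      obtain ⟨i, hiS, hti⟩ := ht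
      rw [Γ.hmount i hiS t hti]
      have h1 : ENNReal.ofReal (Γ.η i / ((t - Γ.ξ i)^2 + (Γ.η i)^2)) = mi i t := by
        simp only [hmi]
        simp only [if_pos hiS, indicator_of_mem hti]
      rw [h1]
      exact le_trans (ENNReal.le_tsum i) (self_le_add_left _ _)
    · rw [Γ.hplateau t ht, ENNReal.ofReal_one]
      exact self_le_add_right _ _
  · intro s
    set I : Set ℝ := Ioo (s - r) (s + r) with hI
    have hIm : MeasurableSet I := measurableSet_Ioo
    have hsplit : (∫⁻ t in I, (1 + ∑' i, mi i t)) =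
        (∫⁻ t in I, 1) + ∫⁻ t in I, ∑' i, mi i t :=
      lintegral_add_left measurable_const _
    have hone : (∫⁻ t in I, (1:ℝ≥0∞)) = ENNReal.ofReal (2 * r) := by
      rw [setLIntegral_one, hI, Real.volume_Ioo]
      congr 1
      ring
    have htsum0 : (∫⁻ t in I, ∑' i, mi i t) = ∑' i, ∫⁻ t in I, mi i t :=
      lintegral_tsum fun i => (hmim i).aemeasurable
    set T : Set ℤ := {i : ℤ | i ∈ Γ.S ∧ (Ico (Γ.a i) (Γ.b i) ∩ I).Nonempty} with hT
    have hvanish : ∀ i ∉ T, (∫⁻ t in I, mi i t) = 0 := by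
      intro i hiT
      by_cases hiS : i ∈ Γ.S
      · have hempty : Ico (Γ.a i) (Γ.b i) ∩ I = ∅ := by
          by_contra hne
          exact hiT ⟨hiS, Set.nonempty_iff_ne_empty.2 hne⟩
        have : ∀ t ∈ I, mi i t = 0 := by
          intro t htI
          simp only [hmi]
          simp only [if_pos hiS]
          apply indicator_of_notMem
          intro htIco
          have hmem : t ∈ Ico (Γ.a i) (Γ.b i) ∩ I := ⟨htIco, htI⟩
          rw [hempty] at hmem
          exact absurd hmem (notMem_empty t)
        rw [setLIntegral_congr_fun hIm this, lintegral_zero]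
      · have : mi i = 0 := by simp only [hmi, if_neg hiS]
        rw [this]
        simp
    have hterm : ∀ i ∈ Γ.S, (∫⁻ t in I, mi i t) ≤ ENNReal.ofReal π := by
      intro i hiS
      have h1 : (∫⁻ t in I, mi i t) ≤ ∫⁻ t, mi i t := setLIntegral_le_lintegral _ _
      have h2 : (∫⁻ t, mi i t) ≤
          ∫⁻ t, ENNReal.ofReal (Γ.η i / ((t - Γ.ξ i)^2 + (Γ.η i)^2)) := by
        refine lintegral_mono fun t => ?_
        simp only [hmi]
        simp only [if_pos hiS]
        exact indicator_le_self _ _ t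
      exact h1.trans (h2.trans (poisson_lintegral (Γ.hη i hiS).1))
    have hT3 : ∀ i ∈ T, ∀ j ∈ T, ∀ k ∈ T, i < j → j < k → False := by
      intro i hi j hj k hk hij hjk
      obtain ⟨x, hxIco, hxI⟩ := hi.2
      obtain ⟨z, hzIco, hzI⟩ := hk.2
      have hbi : Γ.b i ≤ Γ.a j := Γ.hord i hi.1 j hj.1 hij
      have hbj : Γ.b j ≤ Γ.a k := Γ.hord j hj.1 k hk.1 hjk
      have hc1j := (Γ.hbase j hj.1).1
      have hxI' : s - r < x := hxI.1
      have hzI' : z < s + r := hzI.2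
      have hx2 : x < Γ.b i := hxIco.2
      have hz1 : Γ.a k ≤ z := hzIco.1
      linarith
    have htsum : (∑' i, ∫⁻ t in I, mi i t) ≤ 2 * ENNReal.ofReal π := by
      by_cases hTe : T = ∅
      · have hz : ∀ i : ℤ, (∫⁻ t in I, mi i t) = 0 := fun i =>
          hvanish i (by rw [hTe]; exact notMem_empty i)
        simp only [hz, tsum_zero]
        exact zero_le
      · obtain ⟨i0, hi0⟩ := Set.nonempty_iff_ne_empty.2 hTe
        by_cases hT1 : ∀ j ∈ T, j = i0
        · have hz : ∀ i ∉ ({i0} : Finset ℤ), (∫⁻ t in I, mi i t) = 0 := by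
            intro i hi
            exact hvanish i fun hiT => hi (by simp [hT1 i hiT])
          rw [tsum_eq_sum hz, Finset.sum_singleton]
          exact le_trans (hterm i0 hi0.1) (le_mul_of_one_le_left zero_le one_le_two)
        · push_neg at hT1
          obtain ⟨i1, hi1T, hi1ne⟩ := hT1
          have hne : i0 ≠ i1 := fun h => hi1ne h.symm
          have hz : ∀ k ∉ ({i0, i1} : Finset ℤ), (∫⁻ t in I, mi k t) = 0 := by
            intro k hk
            refine hvanish k fun hkT => ?_
            simp only [Finset.mem_insert, Finset.mem_singleton] at hk
            push_neg at hk
            obtain ⟨hk0, hk1⟩ := hk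
            rcases lt_trichotomy i0 i1 with h01 | h01 | h01
            · rcases lt_trichotomy i1 k with h1k | h1k | h1k
              · exact hT3 i0 hi0 i1 hi1T k hkT h01 h1k
              · exact hk1 h1k.symm
              · rcases lt_trichotomy i0 k with h0k | h0k | h0k
                · exact hT3 i0 hi0 k hkT i1 hi1T h0k h1k
                · exact hk0 h0k.symm
                · exact hT3 k hkT i0 hi0 i1 hi1T h0k h01
            · exact hne h01
            · rcases lt_trichotomy i0 k with h0k | h0k | h0k
              · exact hT3 i1 hi1T i0 hi0 k hkT h01 h0k
              · exact hk0 h0k.symm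
              · rcases lt_trichotomy i1 k with h1k | h1k | h1k
                · exact hT3 i1 hi1T k hkT i0 hi0 h1k h0k
                · exact hk1 h1k.symm
                · exact hT3 k hkT i1 hi1T i0 hi0 h1k h01
          rw [tsum_eq_sum hz, Finset.sum_pair hne, two_mul]
          exact add_le_add (hterm i0 hi0.1) (hterm i1 hi1T.1)
    calc (∫⁻ t in I, (1 + ∑' i, mi i t)) = (∫⁻ t in I, 1) + ∫⁻ t in I, ∑' i, mi i t := hsplit
      _ = ENNReal.ofReal (2 * r) + ∑' i, ∫⁻ t in I, mi i t := by rw [hone, htsum0]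
      _ ≤ _ := add_le_add_right htsum _

theorem stmt11 (Γ : MountainChain) (ε p : ℝ) (hε : 0 < ε) (hp : 1 < p) :
    ∃ C : ENNReal, 0 < C ∧ C < ⊤ ∧
      ∀ f : ℂ → ℂ, DifferentiableOn ℂ f {z : ℂ | |z.im| < ε} →
        (∫⁻ t : ℝ, ENNReal.ofReal (‖f (t : ℂ)‖ ^ p * Γ.toFun t)) ≤
          C * ⨆ y : {y : ℝ // |y| < ε},
            ∫⁻ t : ℝ, ENNReal.ofReal (‖f ((t : ℂ) + (y : ℝ) * Complex.I)‖ ^ p) := by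
  classical
  set r : ℝ := min (ε/2) (Γ.c1/2) with hrdef
  have hr : 0 < r := lt_min (by linarith) (by linarith [Γ.hc1])
  have hrε : r < ε := lt_of_le_of_lt (min_le_left _ _) (by linarith)
  have h2r : 2 * r ≤ Γ.c1 := by
    have h := min_le_right (ε/2) (Γ.c1/2)
    rw [hrdef]
    linarith
  obtain ⟨GM, hGMm, hGMle, hGMbound⟩ := chain_bound Γ hr h2r
  set U : Set ℂ := {z : ℂ | |z.im| < ε} with hUdef
  set τ : ℝ≥0∞ := ENNReal.ofReal (2 * π) with hτ
  set σ : ℝ≥0∞ := ENNReal.ofReal (r ^ 2 / 2) with hσ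
  set c0 : ℝ≥0∞ := τ * σ with hc0
  have hτ0 : τ ≠ 0 := by
    rw [hτ]
    simp only [ne_eq, ENNReal.ofReal_eq_zero, not_le]
    positivity
  have hσ0 : σ ≠ 0 := by
    rw [hσ]
    simp only [ne_eq, ENNReal.ofReal_eq_zero, not_le]
    positivity
  have hc00 : c0 ≠ 0 := mul_ne_zero hτ0 hσ0
  have hc0t : c0 ≠ ⊤ := ENNReal.mul_ne_top ENNReal.ofReal_ne_top ENNReal.ofReal_ne_top
  set M₀ : ℝ≥0∞ := ENNReal.ofReal (2 * r) + 2 * ENNReal.ofReal π with hM₀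
  have h2r0 : ENNReal.ofReal (2 * r) ≠ 0 := by
    simp only [ne_eq, ENNReal.ofReal_eq_zero, not_le]
    linarith
  have hM₀0 : M₀ ≠ 0 := by
    rw [hM₀]
    intro h
    rw [add_eq_zero] at h
    exact h2r0 h.1
  have hM₀t : M₀ ≠ ⊤ := by
    rw [hM₀]
    exact ENNReal.add_ne_top.2 ⟨ENNReal.ofReal_ne_top,
      ENNReal.mul_ne_top (by norm_num) ENNReal.ofReal_ne_top⟩
  refine ⟨c0⁻¹ * (M₀ * ENNReal.ofReal (2 * r)), ?_, ?_, ?_⟩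
  · refine ENNReal.mul_pos (ENNReal.inv_ne_zero.2 hc0t) (mul_ne_zero hM₀0 h2r0)
  · refine ENNReal.mul_lt_top ?_ ?_
    · exact ENNReal.inv_lt_top.2 (pos_iff_ne_zero.2 hc00)
    · exact ENNReal.mul_lt_top hM₀t.lt_top ENNReal.ofReal_lt_top
  intro f hf
  set g : ℂ → ℝ≥0∞ := fun z => ENNReal.ofReal (‖f z‖ ^ p) with hgdef
  have hgc : ContinuousOn g U := by
    apply ENNReal.continuous_ofReal.comp_continuousOn
    exact (continuous_norm.comp_continuousOn hf.continuousOn).rpow_const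
      (fun x _ => Or.inr (by positivity))
  have hWm : Measurable (U.indicator g) :=
    measurable_indicator_of_continuousOn (isOpen_strip ε) hgc
  set Φ : ℝ × ℝ → ℝ≥0∞ := fun q => U.indicator g ((q.1 : ℂ) + (q.2 : ℂ) * Complex.I) with hΦdef
  have hem : Measurable (fun q : ℝ × ℝ => ((q.1 : ℂ) + (q.2 : ℂ) * Complex.I)) := by
    apply Measurable.add
    · exact Complex.measurable_ofReal.comp measurable_fst
    · exact (Complex.measurable_ofReal.comp measurable_snd).mul_const _
  have hΦm : Measurable Φ := hWm.comp hem
  have hΦt : ∀ q, Φ q ≠ ⊤ := by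
    intro q
    rw [hΦdef]
    simp only
    by_cases h : ((q.1 : ℂ) + (q.2 : ℂ) * Complex.I) ∈ U
    · rw [Set.indicator_of_mem h]
      exact ENNReal.ofReal_ne_top
    · rw [Set.indicator_of_notMem h]
      exact ENNReal.zero_ne_top
  set R : ℝ → ℝ≥0∞ := fun t => ∫⁻ q in Ioo (t - r) (t + r) ×ˢ Ioo (-r) r, Φ q with hRdef
  have hA : ∀ t : ℝ, ENNReal.ofReal (‖f t‖ ^ p) ≤ c0⁻¹ * R t := by
    intro t
    have h1 := area_bound hp hr hrε f hf t
    calc ENNReal.ofReal (‖f t‖ ^ p)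
        = c0⁻¹ * (ENNReal.ofReal (‖f t‖ ^ p) * c0) := by
          rw [mul_comm _ c0, ← mul_assoc, ENNReal.inv_mul_cancel hc00 hc0t, one_mul]
      _ ≤ c0⁻¹ * R t := mul_le_mul_right h1 _
  have hLHS1 : (∫⁻ t : ℝ, ENNReal.ofReal (‖f t‖ ^ p * Γ.toFun t))
      ≤ ∫⁻ t : ℝ, (c0⁻¹ * R t) * GM t := by
    refine lintegral_mono fun t => ?_
    rw [ENNReal.ofReal_mul (Real.rpow_nonneg (norm_nonneg _) p)]
    exact mul_le_mul' (hA t) (hGMle t)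
  have hpull : (∫⁻ t : ℝ, (c0⁻¹ * R t) * GM t) = c0⁻¹ * ∫⁻ t : ℝ, R t * GM t := by
    simp_rw [mul_assoc]
    exact lintegral_const_mul' _ _ (ENNReal.inv_ne_top.2 hc00)
  set E : Set (ℝ × (ℝ × ℝ)) := {x | x.2 ∈ Ioo (x.1 - r) (x.1 + r) ×ˢ Ioo (-r) r} with hEdef
  have hEm : MeasurableSet E := by
    have h1 : E = ({x : ℝ × (ℝ × ℝ) | x.1 - r < x.2.1} ∩ {x | x.2.1 < x.1 + r} ∩
        {x | -r < x.2.2}) ∩ {x | x.2.2 < r} := by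
      ext x
      simp only [hEdef, mem_setOf_eq, mem_inter_iff, mem_prod, mem_Ioo]
      tauto
    rw [h1]
    refine MeasurableSet.inter (MeasurableSet.inter (MeasurableSet.inter ?_ ?_) ?_) ?_
    · exact measurableSet_lt (measurable_fst.sub_const r) (measurable_snd.fst)
    · exact measurableSet_lt measurable_snd.fst (measurable_fst.add_const r)
    · exact measurableSet_lt measurable_const measurable_snd.snd
    · exact measurableSet_lt measurable_snd.snd measurable_const
  set K : ℝ → ℝ × ℝ → ℝ≥0∞ :=
    fun t q => E.indicator (fun _ => (1 : ℝ≥0∞)) (t, q) * Φ q * GM t with hKdef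
  have hKum : AEMeasurable (Function.uncurry K)
      ((volume : Measure ℝ).prod (volume : Measure (ℝ × ℝ))) := by
    have he : Function.uncurry K = fun x : ℝ × (ℝ × ℝ) =>
        E.indicator (fun _ => (1 : ℝ≥0∞)) x * Φ x.2 * GM x.1 := rfl
    rw [he]
    exact (((measurable_const.indicator hEm).mul (hΦm.comp measurable_snd)).mul
      (hGMm.comp measurable_fst)).aemeasurable
  have hRGM : ∀ t : ℝ, R t * GM t = ∫⁻ q : ℝ × ℝ, K t q := by
    intro t
    have h1 : ∀ q : ℝ × ℝ, K t q =
        (Ioo (t - r) (t + r) ×ˢ Ioo (-r) r).indicator Φ q * GM t := by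
      intro q
      by_cases hq : q ∈ Ioo (t - r) (t + r) ×ˢ Ioo (-r) r
      · rw [hKdef]
        simp only
        rw [Set.indicator_of_mem hq, Set.indicator_of_mem (show (t, q) ∈ E from hq), one_mul]
      · rw [hKdef]
        simp only
        rw [Set.indicator_of_notMem hq,
          Set.indicator_of_notMem (show (t, q) ∉ E from hq), zero_mul, zero_mul]
    simp_rw [h1]
    rw [lintegral_mul_const'' _ (hΦm.indicator (measurableSet_Ioo.prod measurableSet_Ioo)).aemeasurable,
      lintegral_indicator (measurableSet_Ioo.prod measurableSet_Ioo)]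
  have hswap : (∫⁻ t : ℝ, ∫⁻ q : ℝ × ℝ, K t q) = ∫⁻ q : ℝ × ℝ, ∫⁻ t : ℝ, K t q :=
    lintegral_lintegral_swap hKum
  have hinner : ∀ q : ℝ × ℝ, (∫⁻ t : ℝ, K t q) ≤
      (Ioo (-r) r).indicator (fun _ => (1 : ℝ≥0∞)) q.2 * Φ q * M₀ := by
    intro q
    set c : ℝ≥0∞ := (Ioo (-r) r).indicator (fun _ => (1 : ℝ≥0∞)) q.2 * Φ q with hc
    have hct : c ≠ ⊤ := by
      rw [hc]
      refine ENNReal.mul_ne_top ?_ (hΦt q)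
      by_cases h : q.2 ∈ Ioo (-r) r
      · rw [Set.indicator_of_mem h]; exact ENNReal.one_ne_top
      · rw [Set.indicator_of_notMem h]; exact ENNReal.zero_ne_top
    have h2 : ∀ t : ℝ, K t q = (Ioo (q.1 - r) (q.1 + r)).indicator (fun t' => c * GM t') t := by
      intro t
      by_cases ht : t ∈ Ioo (q.1 - r) (q.1 + r)
      · rw [Set.indicator_of_mem ht]
        by_cases h2q : q.2 ∈ Ioo (-r) r
        · have hE1 : (t, q) ∈ E :=
            ⟨⟨by have := ht.2; linarith, by have := ht.1; linarith⟩, h2q⟩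
          rw [hKdef]
          simp only
          rw [Set.indicator_of_mem hE1, one_mul, hc, Set.indicator_of_mem h2q, one_mul]
        · have hE1 : (t, q) ∉ E := fun h => h2q h.2
          rw [hKdef]
          simp only
          rw [Set.indicator_of_notMem hE1, zero_mul, zero_mul, hc,
            Set.indicator_of_notMem h2q, zero_mul, zero_mul]
      · rw [Set.indicator_of_notMem ht]
        have hE1 : (t, q) ∉ E := by
          intro h
          obtain ⟨⟨ha1, ha2⟩, _⟩ := h
          exact ht ⟨by linarith, by linarith⟩
        rw [hKdef]
        simp only
        rw [Set.indicator_of_notMem hE1, zero_mul, zero_mul]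
    calc (∫⁻ t : ℝ, K t q) = ∫⁻ t in Ioo (q.1 - r) (q.1 + r), c * GM t := by
          simp_rw [h2]
          exact lintegral_indicator measurableSet_Ioo _
      _ = c * ∫⁻ t in Ioo (q.1 - r) (q.1 + r), GM t := lintegral_const_mul' _ _ hct
      _ ≤ c * M₀ := mul_le_mul_right (hGMbound q.1) _
      _ = _ := by rw [hc]
  set Sup : ℝ≥0∞ := ⨆ y : {y : ℝ // |y| < ε},
    ∫⁻ s : ℝ, ENNReal.ofReal (‖f ((s : ℂ) + (y : ℝ) * Complex.I)‖ ^ p) with hSup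
  have hfinal : (∫⁻ q : ℝ × ℝ, (Ioo (-r) r).indicator (fun _ => (1 : ℝ≥0∞)) q.2 * Φ q * M₀)
      ≤ M₀ * ENNReal.ofReal (2 * r) * Sup := by
    have hprod : (∫⁻ q : ℝ × ℝ, (Ioo (-r) r).indicator (fun _ => (1 : ℝ≥0∞)) q.2 * Φ q * M₀)
        = ∫⁻ y : ℝ, ∫⁻ s : ℝ,
            (Ioo (-r) r).indicator (fun _ => (1 : ℝ≥0∞)) y * Φ (s, y) * M₀ := by
      rw [show (volume : Measure (ℝ × ℝ)) = (volume : Measure ℝ).prod volume from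
        Measure.volume_eq_prod ℝ ℝ]
      exact lintegral_prod_symm _
        ((((measurable_const.indicator measurableSet_Ioo).comp measurable_snd).mul hΦm).mul
          measurable_const).aemeasurable
    rw [hprod]
    have hy : ∀ y : ℝ, (∫⁻ s : ℝ,
        (Ioo (-r) r).indicator (fun _ => (1 : ℝ≥0∞)) y * Φ (s, y) * M₀)
        ≤ (Ioo (-r) r).indicator (fun _ => M₀ * Sup) y := by
      intro y
      by_cases hyB : y ∈ Ioo (-r) r
      · simp_rw [Set.indicator_of_mem hyB, one_mul]
        have hyε : |y| < ε := by
          rw [abs_lt]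
          exact ⟨by linarith [hyB.1, hrε], by linarith [hyB.2, hrε]⟩
        have hΦy : ∀ s : ℝ, Φ (s, y)
            = ENNReal.ofReal (‖f ((s : ℂ) + (y : ℝ) * Complex.I)‖ ^ p) := by
          intro s
          rw [hΦdef]
          simp only
          refine Set.indicator_of_mem ?_ _
          show |((s : ℂ) + (y : ℂ) * Complex.I).im| < ε
          simpa using hyε
        calc (∫⁻ s : ℝ, Φ (s, y) * M₀) = (∫⁻ s : ℝ, Φ (s, y)) * M₀ :=
              lintegral_mul_const' _ _ hM₀t
          _ ≤ Sup * M₀ := by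
              refine mul_le_mul_left ?_ M₀
              have he : (∫⁻ s : ℝ, Φ (s, y)) = ∫⁻ s : ℝ,
                  ENNReal.ofReal (‖f ((s : ℂ) + (y : ℝ) * Complex.I)‖ ^ p) :=
                lintegral_congr fun s => hΦy s
              rw [he, hSup]
              exact le_iSup (fun y : {y : ℝ // |y| < ε} => ∫⁻ s : ℝ,
                ENNReal.ofReal (‖f ((s : ℂ) + (y : ℝ) * Complex.I)‖ ^ p)) ⟨y, hyε⟩
          _ = M₀ * Sup := mul_comm _ _
      · simp_rw [Set.indicator_of_notMem hyB, zero_mul]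
        simp
    calc (∫⁻ y : ℝ, ∫⁻ s : ℝ,
          (Ioo (-r) r).indicator (fun _ => (1 : ℝ≥0∞)) y * Φ (s, y) * M₀)
        ≤ ∫⁻ y : ℝ, (Ioo (-r) r).indicator (fun _ => M₀ * Sup) y := lintegral_mono hy
      _ = M₀ * Sup * volume (Ioo (-r) r) := lintegral_indicator_const measurableSet_Ioo _
      _ = M₀ * ENNReal.ofReal (2 * r) * Sup := by
          rw [Real.volume_Ioo, show r - -r = 2 * r by ring]
          ring
  calc (∫⁻ t : ℝ, ENNReal.ofReal (‖f t‖ ^ p * Γ.toFun t))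
      ≤ ∫⁻ t : ℝ, (c0⁻¹ * R t) * GM t := hLHS1
    _ = c0⁻¹ * ∫⁻ t : ℝ, R t * GM t := hpull
    _ = c0⁻¹ * ∫⁻ t : ℝ, ∫⁻ q : ℝ × ℝ, K t q := by
        rw [lintegral_congr hRGM]
    _ = c0⁻¹ * ∫⁻ q : ℝ × ℝ, ∫⁻ t : ℝ, K t q := by rw [hswap]
    _ ≤ c0⁻¹ * ∫⁻ q : ℝ × ℝ, (Ioo (-r) r).indicator (fun _ => (1 : ℝ≥0∞)) q.2 * Φ q * M₀ :=
        mul_le_mul_right (lintegral_mono hinner) _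
    _ ≤ c0⁻¹ * (M₀ * ENNReal.ofReal (2 * r) * Sup) := mul_le_mul_right hfinal _
    _ = c0⁻¹ * (M₀ * ENNReal.ofReal (2 * r)) * Sup := by ring
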